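/- The function z(β) = coth(β) − 1/β, extended by z(0) = 0, is an odd, continuous, strictly increasing function from ℝ to (−1,1), and it is a bijection from ℝ onto (−1,1). -/

import Mathlib

open Set

/-- `z(β) = coth β − 1/β`, with (Lean's) convention giving `z 0 = 0`. -/
noncomputable def z (β : ℝ) : ℝ := Real.cosh β / Real.sinh β - 1/β

open Real Filter

lemma z_zero : z 0 = 0 := by simp [z]

lemma z_neg (β : ℝ) : z (-β) = - z β := by
  simp [z, Real.cosh_neg, Real.sinh_neg, div_neg, neg_div]
  ring

/-- `β cosh β - sinh β ≥ 0` for `β ≥ 0`. -/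
lemma lemA {β : ℝ} (hβ : 0 ≤ β) : Real.sinh β ≤ β * Real.cosh β := by
  have hmono : MonotoneOn (fun b => b * Real.cosh b - Real.sinh b) (Ici (0:ℝ)) := by
    apply monotoneOn_of_deriv_nonneg (convex_Ici 0)
    · fun_prop
    · intro x _
      exact (((hasDerivAt_id x).mul (Real.hasDerivAt_cosh x)).sub
        (Real.hasDerivAt_sinh x)).differentiableAt.differentiableWithinAt
    · intro x hx
      rw [interior_Ici] at hx
      have hx' : (0:ℝ) < x := hx
      have hd : HasDerivAt (fun b => b * Real.cosh b - Real.sinh b)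
          (1 * Real.cosh x + x * Real.sinh x - Real.cosh x) x :=
        ((hasDerivAt_id x).mul (Real.hasDerivAt_cosh x)).sub (Real.hasDerivAt_sinh x)
      rw [hd.deriv]
      have : (0:ℝ) ≤ x * Real.sinh x :=
        mul_nonneg hx'.le (Real.sinh_nonneg_iff.mpr hx'.le)
      linarith
  have := hmono (self_mem_Ici) (mem_Ici.mpr hβ) hβ
  simpa using this

/-- `β cosh β - sinh β ≤ β² sinh β` for `β ≥ 0`. -/
lemma lemB {β : ℝ} (hβ : 0 ≤ β) :
    β * Real.cosh β - Real.sinh β ≤ β ^ 2 * Real.sinh β := by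
  have hmono : MonotoneOn
      (fun b => b ^ 2 * Real.sinh b + Real.sinh b - b * Real.cosh b) (Ici (0:ℝ)) := by
    apply monotoneOn_of_deriv_nonneg (convex_Ici 0)
    · fun_prop
    · intro x _
      exact ((((hasDerivAt_pow 2 x).mul (Real.hasDerivAt_sinh x)).add
        (Real.hasDerivAt_sinh x)).sub
        ((hasDerivAt_id x).mul (Real.hasDerivAt_cosh x))).differentiableAt.differentiableWithinAt
    · intro x hx
      rw [interior_Ici] at hx
      have hx' : (0:ℝ) < x := hx
      have hd : HasDerivAt (fun b => b ^ 2 * Real.sinh b + Real.sinh b - b * Real.cosh b)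
          (((2:ℕ) * x ^ (2-1) * Real.sinh x + x ^ 2 * Real.cosh x + Real.cosh x)
            - (1 * Real.cosh x + x * Real.sinh x)) x :=
        (((hasDerivAt_pow 2 x).mul (Real.hasDerivAt_sinh x)).add
          (Real.hasDerivAt_sinh x)).sub ((hasDerivAt_id x).mul (Real.hasDerivAt_cosh x))
      rw [hd.deriv]
      have h1 : (0:ℝ) ≤ x * Real.sinh x := mul_nonneg hx'.le (Real.sinh_nonneg_iff.mpr hx'.le)
      have h2 : (0:ℝ) ≤ x ^ 2 * Real.cosh x := mul_nonneg (sq_nonneg x) (Real.cosh_pos x).le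
      norm_num
      nlinarith
  have h0 := hmono (self_mem_Ici) (mem_Ici.mpr hβ) hβ
  norm_num at h0
  linarith

lemma z_eq {β : ℝ} (hβ : β ≠ 0) :
    z β = (β * Real.cosh β - Real.sinh β) / (β * Real.sinh β) := by
  have hs : Real.sinh β ≠ 0 := Real.sinh_ne_zero.mpr hβ
  unfold z
  rw [div_sub_div _ _ hs hβ]
  ring

lemma z_mem_pos {β : ℝ} (hβ : 0 < β) : z β ∈ Icc (0:ℝ) β := by
  have hs : 0 < Real.sinh β := Real.sinh_pos_iff.mpr hβ
  have hden : 0 < β * Real.sinh β := mul_pos hβ hs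
  rw [z_eq hβ.ne']
  constructor
  · apply div_nonneg _ hden.le
    linarith [lemA hβ.le]
  · rw [div_le_iff₀ hden]
    have := lemB hβ.le
    nlinarith

lemma z_abs_le (β : ℝ) : |z β| ≤ |β| := by
  rcases lt_trichotomy β 0 with h | h | h
  · have hz : z β = - z (-β) := by rw [z_neg, neg_neg]
    have hm := z_mem_pos (neg_pos.mpr h)
    rw [hz, abs_neg, abs_of_nonneg hm.1, abs_of_neg h]
    exact hm.2
  · simp [h, z_zero]
  · have hm := z_mem_pos h
    rw [abs_of_nonneg hm.1, abs_of_pos h]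
    exact hm.2

lemma z_continuous : Continuous z := by
  rw [continuous_iff_continuousAt]
  intro β
  rcases eq_or_ne β 0 with rfl | hβ
  · rw [ContinuousAt, z_zero]
    apply squeeze_zero_norm (fun b => z_abs_le b)
    simpa using (continuous_abs.tendsto (0:ℝ))
  · have hs : Real.sinh β ≠ 0 := Real.sinh_ne_zero.mpr hβ
    exact ((Real.continuous_cosh.continuousAt.div
      Real.continuous_sinh.continuousAt hs).sub
      ((continuousAt_const.div continuousAt_id hβ)))

lemma z_hasDeriv {β : ℝ} (hβ : β ≠ 0) :
    HasDerivAt z (1 / β ^ 2 - 1 / Real.sinh β ^ 2) β := by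
  have hs : Real.sinh β ≠ 0 := Real.sinh_ne_zero.mpr hβ
  have h1 : HasDerivAt (fun b => Real.cosh b / Real.sinh b)
      ((Real.sinh β * Real.sinh β - Real.cosh β * Real.cosh β) / Real.sinh β ^ 2) β :=
    (Real.hasDerivAt_cosh β).div (Real.hasDerivAt_sinh β) hs
  have h2 : HasDerivAt (fun b : ℝ => 1 / b) (-(1 / β ^ 2)) β := by
    simpa [one_div] using hasDerivAt_inv hβ
  have h3 := h1.sub h2
  have hsq : Real.cosh β ^ 2 - Real.sinh β ^ 2 = 1 := Real.cosh_sq_sub_sinh_sq β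
  have key : (Real.sinh β * Real.sinh β - Real.cosh β * Real.cosh β) / Real.sinh β ^ 2
      - -(1 / β ^ 2) = 1 / β ^ 2 - 1 / Real.sinh β ^ 2 := by
    have hnum : Real.sinh β * Real.sinh β - Real.cosh β * Real.cosh β = -1 := by
      nlinarith [hsq]
    rw [hnum]
    field_simp
    ring
  rw [key] at h3
  exact h3

lemma z_strictMonoOn : StrictMonoOn z (Ici (0:ℝ)) := by
  apply strictMonoOn_of_deriv_pos (convex_Ici 0) (z_continuous.continuousOn)
  intro x hx
  rw [interior_Ici] at hx
  have hx' : (0:ℝ) < x := hx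
  rw [(z_hasDeriv hx'.ne').deriv]
  have hs : x < Real.sinh x := Real.self_lt_sinh_iff.mpr hx'
  have hx2 : (0:ℝ) < x ^ 2 := by positivity
  have hs2 : x ^ 2 < Real.sinh x ^ 2 := by nlinarith
  have : 1 / Real.sinh x ^ 2 < 1 / x ^ 2 := one_div_lt_one_div_of_lt hx2 hs2
  linarith

lemma z_pos {β : ℝ} (hβ : 0 < β) : 0 < z β := by
  have := z_strictMonoOn (self_mem_Ici) (mem_Ici.mpr hβ.le) hβ
  rwa [z_zero] at this

lemma z_strictMono : StrictMono z := by
  intro x y hxy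
  rcases le_or_gt 0 x with hx | hx
  · exact z_strictMonoOn (mem_Ici.mpr hx) (mem_Ici.mpr (hx.trans hxy.le)) hxy
  · rcases le_or_gt y 0 with hy | hy
    · have h1 : z (-y) < z (-x) :=
        z_strictMonoOn (mem_Ici.mpr (neg_nonneg.mpr hy))
          (mem_Ici.mpr (by linarith)) (by linarith)
      have hx' := z_neg x
      have hy' := z_neg y
      linarith
    · have h1 : z x < 0 := by
        have h2 := z_pos (neg_pos.mpr hx)
        have := z_neg x
        linarith
      linarith [z_pos hy]

lemma z_lt_one {β : ℝ} (hβ : 0 < β) : z β < 1 := by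
  have hs : 0 < Real.sinh β := Real.sinh_pos_iff.mpr hβ
  have hden : 0 < β * Real.sinh β := mul_pos hβ hs
  rw [z_eq hβ.ne', div_lt_one hden]
  have hcs : Real.cosh β - Real.sinh β = Real.exp (-β) := Real.cosh_sub_sinh β
  have he : Real.exp (-β) < 1 := by
    rw [Real.exp_lt_one_iff]; linarith
  have hself : β < Real.sinh β := Real.self_lt_sinh_iff.mpr hβ
  nlinarith

lemma z_mapsTo (β : ℝ) : z β ∈ Ioo (-1:ℝ) 1 := by
  rcases lt_trichotomy β 0 with h | h | h
  · have h1 := z_lt_one (neg_pos.mpr h)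
    have h2 := z_pos (neg_pos.mpr h)
    have := z_neg β
    exact ⟨by linarith, by linarith⟩
  · rw [h, z_zero]; exact ⟨by norm_num, by norm_num⟩
  · exact ⟨by linarith [z_pos h], z_lt_one h⟩

lemma z_tendsto : Tendsto z atTop (nhds 1) := by
  have hsinh : Tendsto Real.sinh atTop atTop := by
    apply tendsto_atTop_mono' atTop _ tendsto_id
    filter_upwards [eventually_gt_atTop (0:ℝ)] with x hx
    exact (Real.self_lt_sinh_iff.mpr hx).le
  have h1 : Tendsto (fun β => Real.exp (-β) / Real.sinh β) atTop (nhds 0) :=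
    Tendsto.div_atTop (Real.tendsto_exp_atBot.comp tendsto_neg_atTop_atBot) hsinh
  have h2 : Tendsto (fun β : ℝ => 1 / β) atTop (nhds 0) := by
    simpa [one_div] using tendsto_inv_atTop_zero
  have h3 : Tendsto (fun β => 1 + Real.exp (-β) / Real.sinh β - 1 / β) atTop (nhds (1 + 0 - 0)) :=
    (tendsto_const_nhds.add h1).sub h2
  norm_num at h3
  apply h3.congr'
  filter_upwards [eventually_gt_atTop (0:ℝ)] with β hβ
  have hs : Real.sinh β ≠ 0 := Real.sinh_ne_zero.mpr hβ.ne'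
  have hcs : Real.cosh β = Real.sinh β + Real.exp (-β) := by
    have := Real.cosh_sub_sinh β; linarith
  rw [z, hcs]
  field_simp

theorem z_odd_continuous_strictMono_bijOn :
    (∀ β : ℝ, z (-β) = - z β) ∧ Continuous z ∧ StrictMono z ∧
    BijOn z univ (Ioo (-1:ℝ) 1) := by
  refine ⟨z_neg, z_continuous, z_strictMono, ⟨fun β _ => z_mapsTo β,
    z_strictMono.injective.injOn, ?_⟩⟩
  -- surjectivity
  have key : ∀ y : ℝ, 0 ≤ y → y < 1 → ∃ x : ℝ, z x = y := by
    intro y hy0 hy1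
    have hev : ∀ᶠ β in atTop, y < z β := z_tendsto.eventually (eventually_gt_nhds hy1)
    obtain ⟨B, hB⟩ := (hev.and (eventually_ge_atTop (0:ℝ))).exists
    have hIcc : y ∈ Icc (z 0) (z B) := by
      rw [z_zero]
      exact ⟨hy0, hB.1.le⟩
    obtain ⟨x, _, hx⟩ := intermediate_value_Icc hB.2 (z_continuous.continuousOn) hIcc
    exact ⟨x, hx⟩
  intro y hy
  rcases le_or_gt 0 y with hy0 | hy0
  · obtain ⟨x, hx⟩ := key y hy0 hy.2
    exact ⟨x, mem_univ x, hx⟩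
  · obtain ⟨x, hx⟩ := key (-y) (by linarith) (by linarith [hy.1])
    refine ⟨-x, mem_univ _, ?_⟩
    rw [z_neg, hx, neg_neg]
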